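/- Let R be a local commutative ring, I an ideal of R generated by a regular sequence (a_1,...,a_n), and M an R-module such that (a_1,...,a_n) is also an M-regular sequence. Then Tor_i^R(R/I, M) = 0 for all i > 0. -/

import Mathlib

open CategoryTheory

open MonoidalCategory Limits HomologicalComplex

noncomputable section TorVanishAux

namespace TorVanishAux

variable {R : Type} [CommRing R]

/-- Tensoring a fixed complex `K` (in the right factor) by a varying module. -/
@[reducible] def tc (K : ChainComplex (ModuleCat R) ℕ) : ModuleCat R ⥤ ChainComplex (ModuleCat R) ℕ where
  obj N := (((tensoringLeft (ModuleCat R)).obj N).mapHomologicalComplex _).obj K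
  map f := (NatTrans.mapHomologicalComplex ((tensoringLeft (ModuleCat R)).map f) _).app K
  map_id N := by ext n : 2; simp
  map_comp f g := by ext n : 2; simp

instance (K : ChainComplex (ModuleCat R) ℕ) : (tc K).PreservesZeroMorphisms where
  map_zero X Y := by
    ext n : 2
    simp [tc]
    rfl

lemma tc_shortExact (K : ChainComplex (ModuleCat R) ℕ) (hK : ∀ n, Module.Flat R (K.X n))
    {S : ShortComplex (ModuleCat R)} (hS : S.ShortExact) :
    (S.map (tc K)).ShortExact := by
  rw [HomologicalComplex.shortExact_iff_degreewise_shortExact]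
  intro n
  have hFlat := hK n
  have hf : Function.Injective S.f := (ModuleCat.mono_iff_injective S.f).1 hS.mono_f
  have hg : Function.Surjective S.g := (ModuleCat.epi_iff_surjective S.g).1 hS.epi_g
  have hex : Function.Exact S.f S.g := by
    rw [LinearMap.exact_iff]
    exact ((ShortComplex.moduleCat_exact_iff_range_eq_ker S).1 hS.exact).symm
  exact
    { exact := by
        rw [ShortComplex.moduleCat_exact_iff_range_eq_ker]
        change LinearMap.range (LinearMap.rTensor (K.X n) S.f.hom) =
          LinearMap.ker (LinearMap.rTensor (K.X n) S.g.hom)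
        exact (LinearMap.exact_iff.1 (Module.Flat.rTensor_exact (K.X n) hex)).symm
      mono_f := (ModuleCat.mono_iff_injective _).2
        (Module.Flat.rTensor_preserves_injective_linearMap (M := K.X n) S.f.hom hf)
      epi_g := (ModuleCat.epi_iff_surjective _).2
        (LinearMap.rTensor_surjective (K.X n) (g := S.g.hom) hg) }

variable {Mc : ModuleCat R}

/-- Identification of the degree 0 homology with the tensor product. -/
def h0Iso (P : ProjectiveResolution Mc) (N : ModuleCat R) :
    ((tc P.complex).obj N).homology 0 ≅ N ⊗ Mc :=
  haveI : PreservesFiniteColimits ((tensoringLeft (ModuleCat R)).obj N) :=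
    (inferInstance : PreservesFiniteColimits (tensorLeft N))
  ChainComplex.isoHomologyι₀ _ ≪≫
    asIso (P.fromLeftDerivedZero' ((tensoringLeft (ModuleCat R)).obj N))

lemma h0Iso_naturality (P : ProjectiveResolution Mc) {N N' : ModuleCat R} (f : N ⟶ N') :
    homologyMap ((tc P.complex).map f) 0 ≫ (h0Iso P N').hom =
      (h0Iso P N).hom ≫ (f ▷ Mc) := by
  haveI : PreservesFiniteColimits ((tensoringLeft (ModuleCat R)).obj N) :=
    (inferInstance : PreservesFiniteColimits (tensorLeft N))
  haveI : PreservesFiniteColimits ((tensoringLeft (ModuleCat R)).obj N') :=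
    (inferInstance : PreservesFiniteColimits (tensorLeft N'))
  have key : opcyclesMap ((tc P.complex).map f) 0 ≫
      P.fromLeftDerivedZero' ((tensoringLeft (ModuleCat R)).obj N') =
      P.fromLeftDerivedZero' ((tensoringLeft (ModuleCat R)).obj N) ≫
        ((tensoringLeft (ModuleCat R)).map f).app Mc := by
    rw [← cancel_epi (HomologicalComplex.pOpcycles ((tc P.complex).obj N) 0),
      HomologicalComplex.p_opcyclesMap_assoc]
    erw [ProjectiveResolution.pOpcycles_comp_fromLeftDerivedZero',
      ProjectiveResolution.pOpcycles_comp_fromLeftDerivedZero'_assoc]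
    exact (((tensoringLeft (ModuleCat R)).map f).naturality (P.π.f 0)).symm
  dsimp only [h0Iso, Iso.trans_hom, asIso_hom]
  rw [HomologicalComplex.isoHomologyι_hom, HomologicalComplex.isoHomologyι_hom,
    HomologicalComplex.homologyι_naturality_assoc, key]
  rfl

lemma mono_homologyMap₀ (P : ProjectiveResolution Mc) {N N' : ModuleCat R} (f : N ⟶ N')
    [Mono (f ▷ Mc)] :
    Mono (homologyMap ((tc P.complex).map f) 0) := by
  have h : homologyMap ((tc P.complex).map f) 0 =
      (h0Iso P N).hom ≫ (f ▷ Mc) ≫ (h0Iso P N').inv := by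
    rw [← Category.assoc, ← h0Iso_naturality P f]
    simp
  rw [h]
  infer_instance

/-- The main inductive step, via the long exact sequence of homology. -/
lemma step (P : ProjectiveResolution Mc) (hP : ∀ n, Module.Flat R (P.complex.X n))
    {S : ShortComplex (ModuleCat R)} (hS : S.ShortExact) [Mono (S.f ▷ Mc)]
    (h1 : ∀ i, 0 < i → IsZero (((tc P.complex).obj S.X₁).homology i))
    (h2 : ∀ i, 0 < i → IsZero (((tc P.complex).obj S.X₂).homology i)) :
    ∀ i, 0 < i → IsZero (((tc P.complex).obj S.X₃).homology i) := by
  have hSE := tc_shortExact P.complex hP hS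
  rintro (_ | i) hi
  · omega
  have rel : (ComplexShape.down ℕ).Rel (i + 1) i := by simp
  have h₃ := hSE.homology_exact₃ (i + 1) i rel
  have hmδ : Mono (hSE.δ (i + 1) i rel) :=
    h₃.mono_g ((h2 (i + 1) (by omega)).eq_of_src _ _)
  have hδ0 : hSE.δ (i + 1) i rel = 0 := by
    cases i with
    | zero =>
      haveI : Mono (homologyMap (S.map (tc P.complex)).f 0) := mono_homologyMap₀ P S.f
      exact zero_of_comp_mono _ (hSE.δ_comp 1 0 rel)
    | succ j =>
      exact (h1 (j + 1) (by omega)).eq_of_tgt _ _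
  exact @IsZero.of_mono_eq_zero _ _ _ _ _ _ hmδ hδ0

lemma isSMulRegular_of_linearEquiv {M N : Type} [AddCommGroup M] [Module R M]
    [AddCommGroup N] [Module R N] (e : M ≃ₗ[R] N) {a : R}
    (h : IsSMulRegular N a) : IsSMulRegular M a := by
  intro x y hxy
  apply e.injective
  apply h
  have := congrArg e hxy
  simpa only [map_smul] using this

section Key

variable {M : Type} [AddCommGroup M] [Module R M]

lemma smul_top_eq (I : Ideal R) : I • (⊤ : Submodule R R) = I := by
  rw [Ideal.smul_eq_mul, Ideal.mul_top]

/-- The base case: the complex tensored by `R ⧸ ⊥ ≅ R` has vanishing positive homology. -/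
lemma base (P : ProjectiveResolution (ModuleCat.of R M)) {N : ModuleCat R}
    (e : N ≅ 𝟙_ (ModuleCat R)) (i : ℕ) (hi : 0 < i) :
    IsZero (((tc P.complex).obj N).homology i) := by
  obtain ⟨n, rfl⟩ : ∃ n, i = n + 1 := ⟨i - 1, by omega⟩
  have hexact : P.complex.ExactAt (n + 1) := P.complex_exactAt_succ n
  have e2 : P.complex ≅ (tc P.complex).obj N :=
    HomologicalComplex.Hom.isoOfComponents
      (fun m => (λ_ (P.complex.X m)).symm ≪≫ whiskerRightIso e.symm (P.complex.X m))
      (by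
        intro p q hpq
        dsimp [tc]
        show ((λ_ (P.complex.X p)).inv ≫ e.inv ▷ P.complex.X p) ≫ N ◁ P.complex.d p q =
          P.complex.d p q ≫ (λ_ (P.complex.X q)).inv ≫ e.inv ▷ P.complex.X q
        rw [Category.assoc, ← whisker_exchange]
        simp)
  rw [← HomologicalComplex.exactAt_iff_isZero_homology]
  exact hexact.of_iso e2

open RingTheory.Sequence in
lemma key (P : ProjectiveResolution (ModuleCat.of R M))
    (hP : ∀ n, Module.Flat R (P.complex.X n)) :
    ∀ (l : List R), IsWeaklyRegular R l → IsWeaklyRegular M l →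
      ∀ i, 0 < i →
        IsZero (((tc P.complex).obj (ModuleCat.of R (R ⧸ Ideal.ofList l))).homology i) := by
  intro l
  induction l using List.reverseRecOn with
  | nil =>
    intro _ _ i hi
    refine base P ?_ i hi
    refine LinearEquiv.toModuleIso ?_
    refine (Submodule.quotEquivOfEqBot _ ?_)
    simp
  | append_singleton l a ih =>
    intro hR hM i hi
    obtain ⟨hRl, hRa⟩ := (isWeaklyRegular_append_iff R l [a]).1 hR
    obtain ⟨hMl, hMa⟩ := (isWeaklyRegular_append_iff M l [a]).1 hM
    rw [isWeaklyRegular_singleton_iff] at hRa hMa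
    -- regularity of a on R ⧸ ofList l
    have hRa' : IsSMulRegular (R ⧸ Ideal.ofList l) a := by
      have heq : (Ideal.ofList l • ⊤ : Submodule R R) = Ideal.ofList l := smul_top_eq _
      rw [heq] at hRa
      exact hRa
    -- the short exact sequence  R/I --a--> R/I --> R/I'
    set I : Ideal R := Ideal.ofList l with hIdef
    set I' : Ideal R := Ideal.ofList (l ++ [a]) with hI'def
    have hle : I ≤ I' := by
      rw [hIdef, hI'def, Ideal.ofList_append]
      exact le_sup_left
    have haI' : a ∈ I' := by
      rw [hI'def]
      exact Ideal.subset_span (by simp)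
    set N : ModuleCat R := ModuleCat.of R (R ⧸ I) with hN
    set N' : ModuleCat R := ModuleCat.of R (R ⧸ I') with hN'
    set g : N ⟶ N' := ModuleCat.ofHom (Submodule.mapQ I I' LinearMap.id (fun x hx => hle hx)) with hg
    have hzero : (a • 𝟙 N) ≫ g = 0 := by
      apply ModuleCat.hom_ext
      apply LinearMap.ext
      intro x
      obtain ⟨r, rfl⟩ := Submodule.Quotient.mk_surjective _ x
      show g (a • Submodule.Quotient.mk r) = 0
      rw [← Submodule.Quotient.mk_smul, hg]
      erw [Submodule.mapQ_apply]
      rw [Submodule.Quotient.mk_eq_zero]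
      simpa using I'.mul_mem_right r haI'
      exact fun x hx => hle hx
    set S : ShortComplex (ModuleCat R) := ShortComplex.mk (a • 𝟙 N) g hzero with hS
    have hSE : S.ShortExact := by
      refine { exact := ?_, mono_f := ?_, epi_g := ?_ }
      · rw [ShortComplex.moduleCat_exact_iff]
        intro x hx
        obtain ⟨r, rfl⟩ := Submodule.Quotient.mk_surjective _ x
        have hrI' : r ∈ I' := by
          rw [← Submodule.Quotient.mk_eq_zero]
          exact hx
        rw [hI'def, Ideal.ofList_append, ← hIdef] at hrI'
        obtain ⟨y, hy, z, hz, hyz⟩ := Submodule.mem_sup.1 hrI'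
        rw [Ideal.ofList_singleton, Ideal.mem_span_singleton'] at hz
        obtain ⟨c, rfl⟩ := hz
        refine ⟨Submodule.Quotient.mk c, ?_⟩
        show a • (Submodule.Quotient.mk c : R ⧸ I) = Submodule.Quotient.mk r
        rw [← Submodule.Quotient.mk_smul, Submodule.Quotient.eq]
        have h2 : a • c - r = -y := by
          rw [← hyz, smul_eq_mul]
          ring
        rw [h2]
        exact I.neg_mem hy
      · rw [ModuleCat.mono_iff_injective]
        intro x y hxy
        exact hRa' hxy
      · rw [ModuleCat.epi_iff_surjective]
        intro x
        obtain ⟨r, rfl⟩ := Submodule.Quotient.mk_surjective _ x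
        exact ⟨Submodule.Quotient.mk r, rfl⟩
    haveI : Mono (S.f ▷ (ModuleCat.of R M)) := by
      have heq : S.f ▷ (ModuleCat.of R M) = a • 𝟙 (N ⊗ ModuleCat.of R M) := by
        show (a • 𝟙 N) ▷ _ = _
        rw [MonoidalLinear.smul_whiskerRight, MonoidalCategory.id_whiskerRight]
      rw [heq, ModuleCat.mono_iff_injective]
      intro x y hxy
      exact isSMulRegular_of_linearEquiv (TensorProduct.quotTensorEquivQuotSMul M I) hMa hxy
    have ih' := ih hRl hMl
    exact step P hP hSE ih' ih' i hi

end Key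

end TorVanishAux

end TorVanishAux

/-- Lemma (`conditiontorind`): over a local commutative ring `R`, if the ideal `I` is generated
by a regular sequence `(a₁, …, aₙ)` which is also `M`-regular, then `Tor_i^R(R/I, M) = 0` for
all `i > 0`. -/
theorem tor_vanishing_of_regular_sequence {R : Type} [CommRing R] [IsLocalRing R]
    (rs : List R) (I : Ideal R) (hI : I = Ideal.span {x | x ∈ rs})
    (hreg : RingTheory.Sequence.IsRegular R rs)
    (M : Type) [AddCommGroup M] [Module R M]
    (hMreg : RingTheory.Sequence.IsRegular M rs) :
    ∀ i : ℕ, 0 < i →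
      Limits.IsZero (((Tor (ModuleCat R) i).obj (ModuleCat.of R (R ⧸ I))).obj
        (ModuleCat.of R M)) := by
  intro i hi
  set Mc := ModuleCat.of R M with hMc
  set P : ProjectiveResolution Mc := projectiveResolution Mc with hPdef
  have hP : ∀ n, Module.Flat R (P.complex.X n) := by
    intro n
    haveI : Projective (ModuleCat.of R (P.complex.X n)) :=
      Projective.of_iso (Iso.refl _) (P.projective n)
    haveI : Module.Projective R (P.complex.X n) := (IsProjective.iff_projective _).2 this
    infer_instance
  have h := TorVanishAux.key P hP rs hreg.toIsWeaklyRegular hMreg.toIsWeaklyRegular i hi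
  have hiso := P.isoLeftDerivedObj
    ((tensoringLeft (ModuleCat R)).obj (ModuleCat.of R (R ⧸ I))) i
  refine Limits.IsZero.of_iso ?_ hiso
  subst hI
  exact h
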